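/- If T is a spanning tree of a graph G such that every maximal clique of G induces a subtree of T, then for every edge uv of G, every vertex w on the tree path between u and v in T is adjacent in G to both u and v. -/

import Mathlib

open SimpleGraph

theorem stmt_0 {V : Type*} [Fintype V] (G T : SimpleGraph V)
    (hGconn : G.Connected) (hsub : T ≤ G) (htree : T.IsTree)
    (hclique : ∀ s : Set V, Maximal G.IsClique s → (T.induce s).Connected) :
    ∀ u v : V, G.Adj u v → ∀ p : T.Path u v, ∀ w ∈ p.1.support,
      w ≠ u → w ≠ v → G.Adj u w ∧ G.Adj v w := by
  classical
  intro u v huv p w hw hwu hwv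
  -- extend {u,v} to a maximal clique
  have hc : G.IsClique {u, v} := by
    exact isClique_pair.mpr (fun _ => huv)
  obtain ⟨s, hle, hmax⟩ := Finite.exists_le_maximal hc
  have hu : u ∈ s := hle (by simp)
  have hv : v ∈ s := hle (by simp)
  -- walk in induced subgraph from u to v
  obtain ⟨q⟩ := (hclique s hmax) ⟨u, hu⟩ ⟨v, hv⟩
  -- map to walk in T
  let q' : T.Walk u v := q.map (Embedding.induce s).toHom
  -- uniqueness of paths in tree
  have hup := isAcyclic_iff_path_unique.mp htree.2
  have hp : p = q'.toPath := hup p q'.toPath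
  have hws : w ∈ s := by
    have : w ∈ q'.support := q'.support_toPath_subset (hp ▸ hw)
    rw [show q'.support = (q.map (Embedding.induce s).toHom).support from rfl, Walk.support_map] at this
    obtain ⟨x, _, hx⟩ := List.mem_map.mp this
    rw [← hx]
    exact x.2
  exact ⟨hmax.1 hu hws (fun h => hwu h.symm),
         hmax.1 hv hws (fun h => hwv h.symm)⟩
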